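/- Let H₁, …, H_m ∈ L(B, B*) be positive operators and let α₁, …, α_m, β₁, …, β_m be complex numbers with |α_j| ≤ |β_j| for each j. Then ‖∑_{j=1}^m α_j H_j‖ ≤ ‖∑_{j=1}^m |β_j| H_j‖. -/

import Mathlib

open scoped ComplexOrder

/-- The conjugate dual of a complex normed space: continuous anti-linear functionals. -/
abbrev ConjDual (B : Type*) [NormedAddCommGroup B] [NormedSpace ℂ B] :=
  B →SL[starRingEnd ℂ] ℂ

lemma herm_of_pos {B : Type*} [NormedAddCommGroup B] [NormedSpace ℂ B]
    (φ : B →L[ℂ] ConjDual B) (hφ : ∀ b : B, 0 ≤ φ b b) (b c : B) :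
    φ c b = (starRingEnd ℂ) (φ b c) := by
  have e1 : φ (b + c) (b + c) = φ b b + φ b c + φ c b + φ c c := by
    simp [map_add]; ring
  have e2 : φ (b + Complex.I • c) (b + Complex.I • c)
      = φ b b + (-Complex.I) * φ b c + Complex.I * φ c b + φ c c := by
    simp [map_add, map_smul, map_smulₛₗ, ContinuousLinearMap.smul_apply, smul_eq_mul,
      Complex.conj_I]
    ring_nf
    linear_combination (-(φ c) c) * Complex.I_sq
  have h1 := hφ (b + c); have h2 := hφ (b + Complex.I • c)
  have hb := hφ b; have hc := hφ c
  rw [e1, Complex.le_def] at h1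
  rw [e2, Complex.le_def] at h2
  rw [Complex.le_def] at hb hc
  simp only [Complex.add_im, Complex.mul_im, Complex.zero_im, Complex.neg_im,
    Complex.I_re, Complex.I_im, Complex.neg_re, Complex.zero_re] at h1 h2 hb hc
  apply Complex.ext <;>
    simp only [Complex.conj_re, Complex.conj_im] <;> linarith [h1.2, h2.2, hb.2, hc.2]

lemma cs_of_pos {B : Type*} [NormedAddCommGroup B] [NormedSpace ℂ B]
    (φ : B →L[ℂ] ConjDual B) (hφ : ∀ b : B, 0 ≤ φ b b) (b c : B) :
    ‖φ b c‖ ^ 2 ≤ (φ b b).re * (φ c c).re := by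
  set x := φ b c with hx
  set X : ℝ := ‖x‖ ^ 2 with hX
  set A : ℝ := (φ b b).re with hA
  set C : ℝ := (φ c c).re with hC
  have hXnn : 0 ≤ X := by positivity
  have hAnn : 0 ≤ A := (Complex.le_def.mp (hφ b)).1
  have hCnn : 0 ≤ C := (Complex.le_def.mp (hφ c)).1
  have key : ∀ s : ℝ, 0 ≤ A - 2*s*X + s^2*X*C := by
    intro s
    have e : φ (b + (-(s:ℂ) * x) • c) (b + (-(s:ℂ) * x) • c)
        = φ b b + ((-2*s*X : ℝ) : ℂ) + ((s^2*X : ℝ) : ℂ) * (φ c c) := by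
      simp only [map_add, ContinuousLinearMap.add_apply, map_smul, map_smulₛₗ,
        ContinuousLinearMap.smul_apply, smul_eq_mul, map_mul, map_neg, Complex.conj_ofReal,
        herm_of_pos φ hφ b c]
      have h1 : (starRingEnd ℂ) x * x = (X:ℂ) := by
        rw [Complex.conj_mul']
        norm_cast
      have h2 : x * (starRingEnd ℂ) x = (X:ℂ) := by rw [mul_comm]; exact h1
      push_cast
      linear_combination (-(s:ℂ))*h1 + (-(s:ℂ) + (s:ℂ)^2*(φ c c))*h2
    have h := hφ (b + (-(s:ℂ) * x) • c)
    rw [e, Complex.le_def] at h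
    have him : (φ c c).im = 0 := ((Complex.le_def.mp (hφ c)).2).symm
    have hre := h.1
    simp only [Complex.add_re, Complex.mul_re, Complex.ofReal_re, Complex.ofReal_im,
      Complex.zero_re, him, mul_zero, zero_mul, sub_zero] at hre
    linarith [hre]
  by_cases hC0 : C = 0
  · rcases eq_or_lt_of_le hXnn with hX0 | hX0
    · nlinarith
    · exfalso
      have h := key ((A + 1) / (2 * X))
      rw [hC0] at h
      have h4 : 2*((A + 1) / (2 * X))*X = A + 1 := by field_simp
      nlinarith [h, h4]
  · have hCpos : 0 < C := lt_of_le_of_ne hCnn (Ne.symm hC0)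
    have h3 : (A - 2*(1/C)*X + (1/C)^2*X*C)*C = A*C - X := by field_simp; ring
    have h5 := mul_nonneg (key (1/C)) hCpos.le
    rw [h3] at h5
    linarith

/-- If `H₁, …, H_m` are positive operators from `B` to `B*` and `|α_j| ≤ |β_j|`, then
`‖∑ α_j H_j‖ ≤ ‖∑ |β_j| H_j‖`. -/
theorem positive_op_comb_norm_le {B : Type*} [NormedAddCommGroup B] [NormedSpace ℂ B]
    [CompleteSpace B] (m : ℕ) (H : Fin m → (B →L[ℂ] ConjDual B))
    (hH : ∀ j, ∀ b : B, 0 ≤ H j b b)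
    (α β : Fin m → ℂ) (hαβ : ∀ j, ‖α j‖ ≤ ‖β j‖) :
    ‖∑ j, α j • H j‖ ≤ ‖∑ j, ((‖β j‖ : ℝ) : ℂ) • H j‖ := by
  set L := ∑ j, α j • H j with hL
  set K := ∑ j, ((‖β j‖ : ℝ) : ℂ) • H j with hK
  have hQnn : ∀ j (b : B), 0 ≤ (H j b b).re := fun j b => (Complex.le_def.mp (hH j b)).1
  have hKre : ∀ b : B, (K b b).re = ∑ j, ‖β j‖ * (H j b b).re := by
    intro b
    simp only [hK, ContinuousLinearMap.sum_apply, ContinuousLinearMap.smul_apply,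
      smul_eq_mul, Complex.re_sum, Complex.mul_re, Complex.ofReal_re, Complex.ofReal_im,
      zero_mul, sub_zero]
  have hKbound : ∀ b : B, (K b b).re ≤ ‖K‖ * ‖b‖ * ‖b‖ := by
    intro b
    calc (K b b).re ≤ ‖K b b‖ := Complex.re_le_norm _
      _ = ‖K b b‖ := rfl
      _ ≤ ‖K b‖ * ‖b‖ := (K b).le_opNorm b
      _ ≤ ‖K‖ * ‖b‖ * ‖b‖ := by
          have := K.le_opNorm b
          exact mul_le_mul_of_nonneg_right this (norm_nonneg b)
  have main : ∀ b c : B, ‖L b c‖ ≤ ‖K‖ * ‖b‖ * ‖c‖ := by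
    intro b c
    have hLbc : L b c = ∑ j, α j * (H j b c) := by
      simp only [hL, ContinuousLinearMap.sum_apply, ContinuousLinearMap.smul_apply,
        smul_eq_mul]
    have step1 : ‖L b c‖ ≤ ∑ j, ‖β j‖ *
        (Real.sqrt ((H j b b).re) * Real.sqrt ((H j c c).re)) := by
      rw [hLbc]
      refine le_trans (norm_sum_le _ _) (Finset.sum_le_sum fun j _ => ?_)
      rw [norm_mul]
      have habs : ‖H j b c‖ ≤ Real.sqrt ((H j b b).re) * Real.sqrt ((H j c c).re) := by
        have h1 := cs_of_pos (H j) (hH j) b c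
        have h2 : ‖H j b c‖ = Real.sqrt (‖H j b c‖ ^ 2) := by
          rw [Real.sqrt_sq (norm_nonneg _)]
        rw [h2, ← Real.sqrt_mul (hQnn j b)]
        exact Real.sqrt_le_sqrt h1
      exact mul_le_mul (hαβ j) habs (norm_nonneg _) (norm_nonneg _)
    have step2 : ∑ j, ‖β j‖ *
        (Real.sqrt ((H j b b).re) * Real.sqrt ((H j c c).re))
        ≤ Real.sqrt ((K b b).re) * Real.sqrt ((K c c).re) := by
      rw [hKre b, hKre c]
      have := Real.sum_sqrt_mul_sqrt_le (Finset.univ : Finset (Fin m))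
        (f := fun j => ‖β j‖ * (H j b b).re)
        (g := fun j => ‖β j‖ * (H j c c).re)
        (fun j => mul_nonneg (norm_nonneg _) (hQnn j b))
        (fun j => mul_nonneg (norm_nonneg _) (hQnn j c))
      refine le_trans (le_of_eq (Finset.sum_congr rfl fun j _ => ?_)) this
      rw [Real.sqrt_mul (norm_nonneg _), Real.sqrt_mul (norm_nonneg _)]
      ring_nf
      rw [Real.sq_sqrt (norm_nonneg _)]
      ring
    have step3 : Real.sqrt ((K b b).re) * Real.sqrt ((K c c).re) ≤ ‖K‖ * ‖b‖ * ‖c‖ := by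
      have hb := Real.sqrt_le_sqrt (hKbound b)
      have hc := Real.sqrt_le_sqrt (hKbound c)
      have eb : Real.sqrt (‖K‖ * ‖b‖ * ‖b‖) = Real.sqrt ‖K‖ * ‖b‖ := by
        rw [mul_assoc, Real.sqrt_mul (norm_nonneg K), Real.sqrt_mul_self (norm_nonneg b)]
      have ec : Real.sqrt (‖K‖ * ‖c‖ * ‖c‖) = Real.sqrt ‖K‖ * ‖c‖ := by
        rw [mul_assoc, Real.sqrt_mul (norm_nonneg K), Real.sqrt_mul_self (norm_nonneg c)]
      calc Real.sqrt ((K b b).re) * Real.sqrt ((K c c).re)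
          ≤ (Real.sqrt ‖K‖ * ‖b‖) * (Real.sqrt ‖K‖ * ‖c‖) := by
            apply mul_le_mul (eb ▸ hb) (ec ▸ hc) (Real.sqrt_nonneg _)
            positivity
        _ = (Real.sqrt ‖K‖ * Real.sqrt ‖K‖) * ‖b‖ * ‖c‖ := by ring
        _ = ‖K‖ * ‖b‖ * ‖c‖ := by rw [Real.mul_self_sqrt (norm_nonneg K)]
    exact le_trans step1 (le_trans step2 step3)
  refine ContinuousLinearMap.opNorm_le_bound L (norm_nonneg K) fun b => ?_
  refine ContinuousLinearMap.opNorm_le_bound (L b)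
    (mul_nonneg (norm_nonneg K) (norm_nonneg b)) fun c => ?_
  calc ‖L b c‖ ≤ ‖K‖ * ‖b‖ * ‖c‖ := main b c
    _ = ‖K‖ * ‖b‖ * ‖c‖ := rfl
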